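/- Let s be a nonzero complex number with s^4 ≠ 1, and let D : ℕ → ℂ satisfy D(1) = 1, D(2) = s − s^{−1}, and D(n+1) = (s − s^{−1})·D(n) + D(n−1) for all n ≥ 2. Then for every natural number m, the odd-index terms satisfy D(2m+1) = [m+1]_{s²} − [m]_{s²}, where [n]_q = (q^n − q^{−n})/(q − q^{−1}) is the bosonic q-number with q = s². -/

import Mathlib

/-- Bosonic q-number `[n]_q = (q^n - q^{-n})/(q - q⁻¹)`. -/
noncomputable def qNum (q : ℂ) (n : ℕ) : ℂ := (q ^ n - q⁻¹ ^ n) / (q - q⁻¹)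

theorem alexander_odd_terms (s : ℂ) (hs : s ≠ 0) (hs4 : s ^ 4 ≠ 1) (D : ℕ → ℂ)
    (hD1 : D 1 = 1) (hD2 : D 2 = s - s⁻¹)
    (hDrec : ∀ n : ℕ, 2 ≤ n → D (n + 1) = (s - s⁻¹) * D n + D (n - 1)) :
    ∀ m : ℕ, D (2 * m + 1) = qNum (s ^ 2) (m + 1) - qNum (s ^ 2) m := by
  have hs2ne : s ^ 2 ≠ 0 := pow_ne_zero _ hs
  have hsum : s + s⁻¹ ≠ 0 := by
    intro h
    apply hs4
    have h2 : s ^ 2 = -1 := by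
      field_simp at h
      linear_combination h
    calc s ^ 4 = (s ^ 2) ^ 2 := by ring
    _ = 1 := by rw [h2]; ring
  have hdiff : s ^ 2 - (s ^ 2)⁻¹ ≠ 0 := by
    intro h
    apply hs4
    field_simp at h
    calc s ^ 4 = s ^ 2 * s ^ 2 := by ring
    _ = 1 := by linear_combination h
  have h1 : (1 : ℂ) + s ^ 2 ≠ 0 := by
    intro h
    apply hsum
    field_simp
    linear_combination h
  have h4 : s ^ 4 - 1 ≠ 0 := sub_ne_zero.mpr hs4
  -- closed form
  set t : ℂ := -s⁻¹ with ht
  have ht2 : t ^ 2 = (s - s⁻¹) * t + 1 := by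
    rw [ht]; field_simp; ring
  have hs2 : s ^ 2 = (s - s⁻¹) * s + 1 := by
    field_simp; ring
  have key : ∀ n : ℕ, D (n + 1) = (s ^ (n + 1) - t ^ (n + 1)) / (s + s⁻¹) ∧
      D (n + 2) = (s ^ (n + 2) - t ^ (n + 2)) / (s + s⁻¹) := by
    intro n
    induction n with
    | zero =>
      constructor
      · rw [hD1, ht]
        rw [pow_one, pow_one, sub_neg_eq_add, div_self hsum]
      · rw [hD2, ht, eq_div_iff hsum]
        field_simp
        rw [zero_add]
        field_simp
        ring
    | succ k ih =>
      refine ⟨ih.2, ?_⟩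
      have hr := hDrec (k + 2) (by omega)
      have : k + 2 - 1 = k + 1 := by omega
      rw [this] at hr
      rw [show k + 1 + 2 = k + 2 + 1 from rfl, hr, ih.1, ih.2]
      have hsp : s ^ (k + 3) = (s - s⁻¹) * s ^ (k + 2) + s ^ (k + 1) := by
        calc s ^ (k + 3) = s ^ (k + 1) * s ^ 2 := by ring
        _ = s ^ (k + 1) * ((s - s⁻¹) * s + 1) := by rw [← hs2]
        _ = (s - s⁻¹) * s ^ (k + 2) + s ^ (k + 1) := by ring
      have htp : t ^ (k + 3) = (s - s⁻¹) * t ^ (k + 2) + t ^ (k + 1) := by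
        calc t ^ (k + 3) = t ^ (k + 1) * t ^ 2 := by ring
        _ = t ^ (k + 1) * ((s - s⁻¹) * t + 1) := by rw [← ht2]
        _ = (s - s⁻¹) * t ^ (k + 2) + t ^ (k + 1) := by ring
      rw [show k + 2 + 1 = k + 3 from rfl, hsp, htp]
      rw [mul_div_assoc', ← add_div]
      congr 1
      ring
  intro m
  have hm : D (2 * m + 1) = (s ^ (2 * m + 1) - t ^ (2 * m + 1)) / (s + s⁻¹) :=
    (key (2 * m)).1
  have htodd : t ^ (2 * m + 1) = -(s⁻¹ ^ (2 * m + 1)) := by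
    rw [ht, show (2 * m + 1) = 2 * m + 1 from rfl]
    rw [neg_pow]
    simp [pow_succ, pow_mul]
  rw [hm, htodd, qNum, qNum, ← sub_div, div_eq_div_iff hsum hdiff]
  simp only [inv_pow]
  field_simp
  ring
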